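/- Let h : ℝ → ℝ be defined by h(ω) = cos((π/2)·log₂(2ω/π)) for π/4 < ω ≤ π and h(ω) = 0 otherwise (the Simoncelli isotropic wavelet radial profile). Then h satisfies the dyadic Riesz partition of unity: for every ω > 0, ∑_{i ∈ ℤ} h(2^i ω)² = 1. -/

import Mathlib

open Real

/-- The Simoncelli isotropic wavelet radial profile satisfies the dyadic Riesz
partition of unity. -/
theorem simoncelli_riesz_partition_of_unity
    (h : ℝ → ℝ)
    (hdef : ∀ ω : ℝ,
      h ω = if π / 4 < ω ∧ ω ≤ π then Real.cos (π / 2 * Real.logb 2 (2 * ω / π)) else 0) :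
    ∀ ω : ℝ, 0 < ω → ∑' i : ℤ, (h ((2 : ℝ) ^ i * ω)) ^ 2 = 1 := by
  intro ω hω
  have hπ := Real.pi_pos
  set t := Real.logb 2 (π / ω) with ht
  set n := ⌊t⌋ with hn
  have hfl : (n:ℝ) ≤ t := Int.floor_le t
  have hfl2 : t - 1 < (n:ℝ) := Int.sub_one_lt_floor t
  have rlt : ∀ a b : ℝ, (2:ℝ) ^ a < (2:ℝ) ^ b ↔ a < b := fun a b =>
    Real.rpow_lt_rpow_left_iff one_lt_two
  have rle : ∀ a b : ℝ, (2:ℝ) ^ a ≤ (2:ℝ) ^ b ↔ a ≤ b := fun a b =>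
    Real.rpow_le_rpow_left_iff one_lt_two
  have key : ∀ i : ℤ, (2:ℝ) ^ i * ω = (2:ℝ) ^ ((i:ℝ) - t) * π := by
    intro i
    rw [Real.rpow_sub two_pos, ht,
      Real.rpow_logb two_pos (by norm_num) (by positivity), Real.rpow_intCast]
    field_simp
  have h4 : (π / 4 : ℝ) = (2:ℝ) ^ (-2 : ℝ) * π := by
    rw [show ((-2:ℝ)) = ((-2 : ℤ) : ℝ) by norm_num, Real.rpow_intCast]
    norm_num; ring
  have hπeq : (π : ℝ) = (2:ℝ) ^ (0:ℝ) * π := by rw [Real.rpow_zero, one_mul]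
  -- characterize the support condition
  have hcond : ∀ i : ℤ, (π / 4 < (2:ℝ) ^ i * ω ∧ (2:ℝ) ^ i * ω ≤ π) ↔ (i = n - 1 ∨ i = n) := by
    intro i
    rw [key i]
    have c1 : π / 4 < (2:ℝ) ^ ((i:ℝ) - t) * π ↔ (-2:ℝ) < (i:ℝ) - t := by
      rw [h4, mul_lt_mul_iff_left₀ hπ, rlt]
    have c2 : (2:ℝ) ^ ((i:ℝ) - t) * π ≤ π ↔ (i:ℝ) - t ≤ 0 := by
      nth_rewrite 2 [hπeq]
      rw [mul_le_mul_iff_left₀ hπ, rle]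
    rw [c1, c2]
    constructor
    · rintro ⟨h1, h2⟩
      have hile : i ≤ n := Int.le_floor.mpr (by linarith)
      have : (n:ℝ) - 2 < (i:ℝ) := by linarith
      have : n - 2 < i := by exact_mod_cast this
      omega
    · rintro (rfl | rfl) <;> constructor <;> push_cast <;> linarith
  -- value on the support
  have hval : ∀ i : ℤ, (i = n - 1 ∨ i = n) →
      h ((2:ℝ) ^ i * ω) = Real.cos (π / 2 * ((i:ℝ) - t + 1)) := by
    intro i hi
    rw [hdef, if_pos ((hcond i).mpr hi), key i]
    congr 1
    have he : 2 * ((2:ℝ) ^ ((i:ℝ) - t) * π) / π = (2:ℝ) ^ ((i:ℝ) - t + 1) := by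
      rw [Real.rpow_add two_pos, Real.rpow_one]
      field_simp
    rw [he, Real.logb_rpow two_pos (by norm_num)]
  have hzero : ∀ i : ℤ, i ∉ ({n - 1, n} : Finset ℤ) → (h ((2:ℝ) ^ i * ω)) ^ 2 = 0 := by
    intro i hi
    simp only [Finset.mem_insert, Finset.mem_singleton] at hi
    rw [hdef, if_neg fun hc => hi ((hcond i).mp hc)]
    ring
  rw [tsum_eq_sum hzero, Finset.sum_pair (by omega : n - 1 ≠ n),
    hval (n-1) (Or.inl rfl), hval n (Or.inr rfl)]
  push_cast
  have e1 : π / 2 * ((n:ℝ) - 1 - t + 1) = π / 2 * ((n:ℝ) - t) := by ring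
  have e2 : π / 2 * ((n:ℝ) - t + 1) = π / 2 * ((n:ℝ) - t) + π / 2 := by ring
  rw [e1, e2, Real.cos_add_pi_div_two, neg_pow]
  simp [Real.sin_sq_add_cos_sq, Real.cos_sq_add_sin_sq]
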